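/- Let (X,d) be a complete metric space and S : X → X satisfy d(S x, S y) ≤ λ·(d(x, S x) + d(y, S y)) for all x, y ∈ X, where λ ∈ [0, 1/2). Then S has a unique fixed point, and for every x₀ ∈ X the iterates Sⁿ x₀ converge to it. -/

import Mathlib

open Filter Topology

private lemma kannan_aux
    {X : Type*} [MetricSpace X] [CompleteSpace X]
    (S : X → X)
    (lam : ℝ) (hlam0 : 0 ≤ lam) (hlam : lam < 1/2)
    (h : ∀ x y : X, dist (S x) (S y) ≤ lam * (dist x (S x) + dist y (S y)))
    (x₀ : X) :
    ∃ u : X, S u = u ∧ Tendsto (fun n => S^[n] x₀) atTop (𝓝 u) := by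
  set r : ℝ := lam / (1 - lam) with hr_def
  have h1lam : (0:ℝ) < 1 - lam := by linarith
  have hr0 : 0 ≤ r := div_nonneg hlam0 h1lam.le
  have hr1 : r < 1 := by
    rw [div_lt_one h1lam]; linarith
  set d : ℕ → ℝ := fun n => dist (S^[n] x₀) (S^[n+1] x₀) with hd_def
  have hstep : ∀ n, d (n+1) ≤ r * d n := by
    intro n
    have := h (S^[n] x₀) (S^[n+1] x₀)
    have e1 : S (S^[n] x₀) = S^[n+1] x₀ := (Function.iterate_succ_apply' S n x₀).symm
    have e2 : S (S^[n+1] x₀) = S^[n+2] x₀ := (Function.iterate_succ_apply' S (n+1) x₀).symm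
    rw [e1, e2] at this
    have : (1 - lam) * d (n+1) ≤ lam * d n := by
      simp only [hd_def]; nlinarith [this]
    rw [hr_def, div_mul_eq_mul_div, le_div_iff₀ h1lam]
    linarith
  have hgeo : ∀ n, d n ≤ d 0 * r ^ n := by
    intro n
    induction n with
    | zero => simp
    | succ k ih =>
      calc d (k+1) ≤ r * d k := hstep k
        _ ≤ r * (d 0 * r ^ k) := by nlinarith
        _ = d 0 * r ^ (k+1) := by ring
  have hcauchy : CauchySeq (fun n => S^[n] x₀) :=
    cauchySeq_of_le_geometric r (d 0) hr1 (fun n => hgeo n)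
  obtain ⟨u, hu⟩ := cauchySeq_tendsto_of_complete hcauchy
  refine ⟨u, ?_, hu⟩
  -- d n → 0
  have hd0 : Tendsto d atTop (𝓝 0) := by
    apply squeeze_zero (fun n => dist_nonneg) hgeo
    simpa using tendsto_const_nhds.mul (tendsto_pow_atTop_nhds_zero_of_lt_one hr0 hr1)
  have hu' : Tendsto (fun n => S^[n+1] x₀) atTop (𝓝 u) :=
    hu.comp (tendsto_add_atTop_nat 1)
  -- bound: dist (S u) u ≤ lam*(dist u (S u) + d n) + dist (S^[n+1] x₀) u
  have hb : ∀ n, dist (S u) u ≤ lam * (dist u (S u) + d n) + dist (S^[n+1] x₀) u := by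
    intro n
    have e1 : S (S^[n] x₀) = S^[n+1] x₀ := (Function.iterate_succ_apply' S n x₀).symm
    have h2 := h u (S^[n] x₀)
    rw [e1] at h2
    calc dist (S u) u ≤ dist (S u) (S^[n+1] x₀) + dist (S^[n+1] x₀) u := dist_triangle _ _ _
      _ ≤ lam * (dist u (S u) + d n) + dist (S^[n+1] x₀) u := by
          exact add_le_add_left h2 _
  have hlim : Tendsto (fun n => lam * (dist u (S u) + d n) + dist (S^[n+1] x₀) u)
      atTop (𝓝 (lam * (dist u (S u) + 0) + 0)) := by
    exact (tendsto_const_nhds.mul (tendsto_const_nhds.add hd0)).add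
      (tendsto_iff_dist_tendsto_zero.mp hu')
  have hfinal : dist (S u) u ≤ lam * dist u (S u) := by
    have := ge_of_tendsto' hlim hb
    simpa using this
  rw [dist_comm u (S u)] at hfinal
  have : dist (S u) u = 0 := by nlinarith [dist_nonneg (x := S u) (y := u)]
  exact dist_eq_zero.mp this

theorem kannan_fixed_point
    {X : Type*} [MetricSpace X] [CompleteSpace X] [Nonempty X]
    (S : X → X)
    (lam : ℝ) (hlam0 : 0 ≤ lam) (hlam : lam < 1/2)
    (h : ∀ x y : X, dist (S x) (S y) ≤ lam * (dist x (S x) + dist y (S y))) :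
    ∃ u : X, (∀ v : X, S v = v ↔ v = u) ∧
      ∀ x₀ : X, Tendsto (fun n => S^[n] x₀) atTop (𝓝 u) := by
  obtain ⟨u, hfix, _⟩ := kannan_aux S lam hlam0 hlam h (Classical.arbitrary X)
  have huniq : ∀ v : X, S v = v → v = u := by
    intro v hv
    have := h v u
    rw [hv, hfix] at this
    simp at this
    exact this
  refine ⟨u, fun v => ⟨huniq v, fun hv => hv ▸ hfix⟩, fun x₀ => ?_⟩
  obtain ⟨u', hfix', htend'⟩ := kannan_aux S lam hlam0 hlam h x₀
  rwa [huniq u' hfix'] at htend'
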